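/- Corollary 2 (asymptotic bounds for the posterior FDR): Assume conditions (C) and (A1), assume d^t ≠ (0,…,0), and assume that for each i with d_i^t = 1 there is a constant H_i > 0 such that (1/n)·log(1 − v_{in}) → −H_i as n → ∞. Let t = #{i : d_i^t = 1} and define FDR_n = (Σ_{i=1}^m d̂_{n,i}(1 − v_{in})) / max(Σ_{i=1}^m d̂_{n,i}, 1), where d̂_n is the non-marginal decision. Then for every ε > 0 there exists n₀ such that for all n ≥ n₀: e^{−nε} · (Σ_{i : d_i^t = 1} e^{−n H_i}) / t ≤ FDR_n ≤ e^{nε} · (Σ_{i : d_i^t = 1} e^{−n H_i}) / t. -/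

import Mathlib

open Filter

set_option maxHeartbeats 1000000

/-- Corollary 2 (asymptotic bounds for the posterior FDR). -/
theorem FDR_asymptotic_bounds
    (m : ℕ) (hm : 1 ≤ m)
    (dt : Fin m → Bool)
    (G : Fin m → Finset (Fin m)) (hG : ∀ i, i ∈ G i)
    (w : ℕ → Fin m → (Fin m → Bool) → ℝ)
    (hw : ∀ n i d, w n i d ∈ Set.Ioo (0:ℝ) 1)
    (v : ℕ → Fin m → ℝ) (hv : ∀ n i, v n i ∈ Set.Ioo (0:ℝ) 1)
    (β : ℕ → ℝ) (hβ : ∀ n, β n ∈ Set.Ioo (0:ℝ) 1)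
    (hA1₁ : 0 < Filter.liminf β Filter.atTop)
    (hA1₂ : Filter.limsup β Filter.atTop < 1)
    (hC1 : ∀ (i : Fin m) (d : Fin m → Bool),
      (∀ j ∈ G i, d j = dt j) → Tendsto (fun n => w n i d) atTop (nhds 1))
    (hC0 : ∀ (i : Fin m) (d : Fin m → Bool),
      (¬ ∀ j ∈ G i, d j = dt j) → Tendsto (fun n => w n i d) atTop (nhds 0))
    (hdt : (Finset.univ.filter (fun i => dt i = true)).Nonempty)
    (H : Fin m → ℝ)
    (hH : ∀ i, dt i = true → 0 < H i ∧
      Tendsto (fun n : ℕ => Real.log (1 - v n i) / n) atTop (nhds (-(H i))))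
    (dhat : ℕ → Fin m → Bool)
    (hdhat : ∀ n (d : Fin m → Bool),
      (∑ i, if d i then w n i d - β n else 0) ≤
        (∑ i, if dhat n i then w n i (dhat n) - β n else 0)) :
    ∀ ε > (0:ℝ), ∃ n₀ : ℕ, ∀ n ≥ n₀,
      Real.exp (-(n:ℝ) * ε) *
          (∑ i ∈ Finset.univ.filter (fun i => dt i = true), Real.exp (-(n:ℝ) * H i)) /
          ((Finset.univ.filter (fun i => dt i = true)).card : ℝ)
        ≤ (∑ i, if dhat n i then 1 - v n i else 0) /
            max (∑ i, if dhat n i then (1:ℝ) else 0) 1 ∧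
      (∑ i, if dhat n i then 1 - v n i else 0) /
            max (∑ i, if dhat n i then (1:ℝ) else 0) 1
        ≤ Real.exp ((n:ℝ) * ε) *
            (∑ i ∈ Finset.univ.filter (fun i => dt i = true), Real.exp (-(n:ℝ) * H i)) /
            ((Finset.univ.filter (fun i => dt i = true)).card : ℝ) := by
  classical
  intro ε hε
  set S := Finset.univ.filter (fun i => dt i = true) with hSdef
  have htpos : 0 < S.card := Finset.card_pos.2 hdt
  have htR : (0:ℝ) < (S.card : ℝ) := by exact_mod_cast htpos
  set a := liminf β atTop with hadef
  set b := limsup β atTop with hbdef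
  have ha0 : 0 < a := hA1₁
  have hb1 : b < 1 := hA1₂
  set b' := (b + 1) / 2 with hb'def
  have hbb' : b < b' := by rw [hb'def]; linarith
  have hb'1 : b' < 1 := by rw [hb'def]; linarith
  set η := min (a/4) (1 - b') / (2 * S.card) with hηdef
  have hmin0 : 0 < min (a/4) (1 - b') := lt_min (by linarith) (by linarith)
  have hη0 : 0 < η := by
    rw [hηdef]
    positivity
  have hηt : (S.card : ℝ) * η < min (a/4) (1 - b') := by
    rw [hηdef]
    rw [mul_div_assoc']
    rw [div_lt_iff₀ (by positivity)]
    nlinarith [hmin0, htR]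
  -- eventual bounds on β
  have hβlow : ∀ᶠ n in atTop, a / 2 < β n := by
    apply eventually_lt_of_lt_liminf
    · rw [← hadef]; linarith
    · exact ⟨0, eventually_map.2 (Eventually.of_forall fun n => (hβ n).1.le)⟩
  have hβhigh : ∀ᶠ n in atTop, β n < b' := by
    apply eventually_lt_of_limsup_lt
    · rw [← hbdef]; exact hbb'
    · exact ⟨1, eventually_map.2 (Eventually.of_forall fun n => (hβ n).2.le)⟩
  -- eventual bounds on w
  have hE1 : ∀ᶠ n in atTop, ∀ i, dt i = true → 1 - η < w n i dt := by
    rw [eventually_all]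
    intro i
    by_cases hi : dt i = true
    · filter_upwards [(hC1 i dt (fun j _ => rfl)).eventually
        (eventually_gt_nhds (show 1 - η < 1 by linarith))] with n h _
      exact h
    · exact Eventually.of_forall fun n h => absurd h hi
  have hE2 : ∀ᶠ n in atTop, ∀ (d : Fin m → Bool) (i : Fin m),
      d i = true → ¬ (∀ j ∈ G i, d j = dt j) → w n i d < a / 4 := by
    rw [eventually_all]
    intro d
    rw [eventually_all]
    intro i
    by_cases hcor : ∀ j ∈ G i, d j = dt j
    · exact Eventually.of_forall fun n _ h => absurd hcor h
    · filter_upwards [(hC0 i d hcor).eventually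
        (eventually_lt_nhds (show (0:ℝ) < a / 4 by linarith))] with n h _ _
      exact h
  -- consistency : eventually dhat n = dt
  have hkey : ∀ᶠ n in atTop, ∀ d : Fin m → Bool, d ≠ dt →
      (∑ i, if d i then w n i d - β n else 0) <
        (∑ i, if dt i then w n i dt - β n else 0) := by
    filter_upwards [hβlow, hβhigh, hE1, hE2] with n h3a h3b h1 h2
    intro d hd
    -- lower bound on f n dt
    have hlow : (S.card : ℝ) * (1 - η - β n) ≤ ∑ i, if dt i then w n i dt - β n else 0 := by
      have : ∑ i, (if dt i then (1 - η - β n) else 0) ≤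
          ∑ i, if dt i then w n i dt - β n else 0 := by
        apply Finset.sum_le_sum
        intro i _
        by_cases hi : dt i = true
        · simp only [hi, if_true]
          have := h1 i hi
          linarith
        · simp [hi]
      refine le_trans (le_of_eq ?_) this
      rw [← Finset.sum_filter]
      rw [Finset.sum_const, nsmul_eq_mul]
    -- upper bound function
    set ub : Fin m → ℝ := fun i =>
      if (d i = true ∧ ∀ j ∈ G i, d j = dt j) then 1 - β n else 0 with hubdef
    have hβn1 : 0 ≤ 1 - β n := by linarith [(hβ n).2]
    have hub_nonneg : ∀ i, 0 ≤ ub i := by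
      intro i
      simp only [hubdef]
      split_ifs with hP
      · linarith
      · exact le_refl 0
    have hub_sum : ∑ i, ub i =
        ((Finset.univ.filter (fun i => d i = true ∧ ∀ j ∈ G i, d j = dt j)).card : ℝ)
          * (1 - β n) := by
      rw [hubdef, ← Finset.sum_filter, Finset.sum_const, nsmul_eq_mul]
    have hPsub : (Finset.univ.filter (fun i => d i = true ∧ ∀ j ∈ G i, d j = dt j)) ⊆ S := by
      intro i hi
      rw [Finset.mem_filter] at hi
      rw [hSdef, Finset.mem_filter]
      exact ⟨Finset.mem_univ i, (hi.2.2 i (hG i)) ▸ hi.2.1⟩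
    have hterm : ∀ i, (if d i then w n i d - β n else 0) ≤ ub i := by
      intro i
      simp only [hubdef]
      split_ifs with hdi hP hP
      · have := (hw n i d).2
        linarith
      · have hcor : ¬ ∀ j ∈ G i, d j = dt j := fun h => hP ⟨hdi, h⟩
        have h2' := h2 d i hdi hcor
        linarith
      · exact absurd hP.1 hdi
      · exact le_refl 0
    by_cases hcase : ∃ i₀, d i₀ = true ∧ ¬ (∀ j ∈ G i₀, d j = dt j)
    · obtain ⟨i₀, hdi₀, hw₀⟩ := hcase
      -- f n d ≤ sum ub - a/4
      have hstep : (∑ i, if d i then w n i d - β n else 0) ≤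
          (∑ i, Function.update ub i₀ (a/4 - β n) i) := by
        apply Finset.sum_le_sum
        intro i _
        by_cases hii : i = i₀
        · subst hii
          rw [Function.update_self]
          simp only [hdi₀, if_true]
          have := h2 d i hdi₀ hw₀
          linarith
        · rw [Function.update_of_ne hii]
          exact hterm i
      have hupd : (∑ i, Function.update ub i₀ (a/4 - β n) i) =
          (∑ i, ub i) - ub i₀ + (a/4 - β n) := by
        rw [Finset.sum_update_of_mem (Finset.mem_univ i₀)]
        rw [Finset.sum_sdiff_eq_sub (Finset.singleton_subset_iff.2 (Finset.mem_univ i₀))]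
        rw [Finset.sum_singleton]
        ring
      have hub₀ : ub i₀ = 0 := by
        rw [hubdef]; simp [hw₀]
      have hcard : ((Finset.univ.filter
          (fun i => d i = true ∧ ∀ j ∈ G i, d j = dt j)).card : ℝ) ≤ (S.card : ℝ) := by
        exact_mod_cast Finset.card_le_card hPsub
      have : (∑ i, if d i then w n i d - β n else 0) ≤
          (S.card : ℝ) * (1 - β n) - a/4 := by
        rw [hupd, hub₀] at hstep
        have := mul_le_mul_of_nonneg_right hcard hβn1
        rw [hub_sum] at hstep
        linarith [h3a]
      have hfin : (S.card : ℝ) * η < a/4 := lt_of_lt_of_le hηt (min_le_left _ _)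
      nlinarith [hlow, htR]
    · push_neg at hcase
      -- all rejected are correct, strict subset
      have hPss : (Finset.univ.filter
          (fun i => d i = true ∧ ∀ j ∈ G i, d j = dt j)) ⊂ S := by
        refine Finset.ssubset_iff_of_subset hPsub |>.2 ?_
        have : ∃ i, d i ≠ dt i := by
          by_contra hcon
          push_neg at hcon
          exact hd (funext hcon)
        obtain ⟨i, hi⟩ := this
        have hdif : d i = false := by
          by_contra hdi
          rw [Bool.not_eq_false] at hdi
          have := hcase i hdi i (hG i)
          exact hi this
        have hdti : dt i = true := by
          by_contra hdti
          rw [Bool.not_eq_true] at hdti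
          rw [hdif, hdti] at hi
          exact hi rfl
        refine ⟨i, ?_, ?_⟩
        · rw [hSdef, Finset.mem_filter]; exact ⟨Finset.mem_univ i, hdti⟩
        · rw [Finset.mem_filter]
          rintro ⟨-, hdi, -⟩
          rw [hdif] at hdi
          exact Bool.false_ne_true hdi
      have hcard : (Finset.univ.filter
          (fun i => d i = true ∧ ∀ j ∈ G i, d j = dt j)).card + 1 ≤ S.card :=
        Finset.card_lt_card hPss
      have hcardR : ((Finset.univ.filter
          (fun i => d i = true ∧ ∀ j ∈ G i, d j = dt j)).card : ℝ) ≤ (S.card : ℝ) - 1 := by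
        have : ((Finset.univ.filter
            (fun i => d i = true ∧ ∀ j ∈ G i, d j = dt j)).card : ℝ) + 1 ≤ (S.card : ℝ) := by
          exact_mod_cast hcard
        linarith
      have hstep : (∑ i, if d i then w n i d - β n else 0) ≤ ((S.card : ℝ) - 1) * (1 - β n) := by
        calc (∑ i, if d i then w n i d - β n else 0) ≤ ∑ i, ub i :=
              Finset.sum_le_sum (fun i _ => hterm i)
          _ = _ := hub_sum
          _ ≤ ((S.card : ℝ) - 1) * (1 - β n) := mul_le_mul_of_nonneg_right hcardR hβn1
      have hfin : (S.card : ℝ) * η < 1 - b' := lt_of_lt_of_le hηt (min_le_right _ _)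
      nlinarith [hlow, htR, h3b]
  have hcons : ∀ᶠ n in atTop, dhat n = dt := by
    filter_upwards [hkey] with n hk
    by_contra hne
    exact absurd (hdhat n dt) (not_le.2 (hk (dhat n) hne))
  -- log bounds
  have hlog : ∀ᶠ n in atTop, ∀ i, dt i = true →
      Real.log (1 - v n i) / (n:ℝ) ∈ Set.Ioo (-(H i) - ε) (-(H i) + ε) := by
    rw [eventually_all]
    intro i
    by_cases hi : dt i = true
    · have hmem : Set.Ioo (-(H i) - ε) (-(H i) + ε) ∈ nhds (-(H i)) :=
        Ioo_mem_nhds (by linarith) (by linarith)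
      filter_upwards [(hH i hi).2 hmem] with n h _
      exact h
    · exact Eventually.of_forall fun n h => absurd h hi
  -- conclusion
  have hfinal : ∀ᶠ n : ℕ in atTop,
      Real.exp (-(n:ℝ) * ε) * (∑ i ∈ S, Real.exp (-(n:ℝ) * H i)) / (S.card : ℝ)
        ≤ (∑ i, if dhat n i then 1 - v n i else 0) /
            max (∑ i, if dhat n i then (1:ℝ) else 0) 1 ∧
      (∑ i, if dhat n i then 1 - v n i else 0) /
            max (∑ i, if dhat n i then (1:ℝ) else 0) 1
        ≤ Real.exp ((n:ℝ) * ε) * (∑ i ∈ S, Real.exp (-(n:ℝ) * H i)) / (S.card : ℝ) := by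
    filter_upwards [hcons, hlog, eventually_ge_atTop 1] with n hdn hl hn1
    have hnR : (0:ℝ) < (n:ℝ) := by exact_mod_cast hn1
    -- rewrite sums
    have hnum : (∑ i, if dhat n i then 1 - v n i else 0) = ∑ i ∈ S, (1 - v n i) := by
      rw [hdn, hSdef, Finset.sum_filter]
    have hden : (∑ i, if dhat n i then (1:ℝ) else 0) = (S.card : ℝ) := by
      rw [hdn, Finset.sum_boole, hSdef]
    have hmax : max (∑ i, if dhat n i then (1:ℝ) else 0) 1 = (S.card : ℝ) := by
      rw [hden, max_eq_left]
      exact_mod_cast htpos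
    have hterm : ∀ i ∈ S, Real.exp (-(n:ℝ) * ε) * Real.exp (-(n:ℝ) * H i) ≤ 1 - v n i ∧
        1 - v n i ≤ Real.exp ((n:ℝ) * ε) * Real.exp (-(n:ℝ) * H i) := by
      intro i hiS
      have hi : dt i = true := by
        rw [hSdef] at hiS
        exact (Finset.mem_filter.1 hiS).2
      have hx : 0 < 1 - v n i := by linarith [(hv n i).2]
      obtain ⟨hl1, hl2⟩ := hl i hi
      have hl1' : (n:ℝ) * (-(H i) - ε) < Real.log (1 - v n i) := by
        rw [lt_div_iff₀ hnR] at hl1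
        linarith [hl1]
      have hl2' : Real.log (1 - v n i) < (n:ℝ) * (-(H i) + ε) := by
        rw [div_lt_iff₀ hnR] at hl2
        linarith [hl2]
      constructor
      · rw [← Real.exp_add]
        rw [← Real.exp_log hx]
        apply Real.exp_le_exp.2
        nlinarith [hl1']
      · rw [← Real.exp_add]
        rw [← Real.exp_log hx]
        apply Real.exp_le_exp.2
        nlinarith [hl2']
    rw [hnum, hmax]
    have hnumle : Real.exp (-(n:ℝ) * ε) * (∑ i ∈ S, Real.exp (-(n:ℝ) * H i)) ≤
        ∑ i ∈ S, (1 - v n i) := by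
      rw [Finset.mul_sum]
      exact Finset.sum_le_sum fun i hi => (hterm i hi).1
    have hnumge : (∑ i ∈ S, (1 - v n i)) ≤
        Real.exp ((n:ℝ) * ε) * (∑ i ∈ S, Real.exp (-(n:ℝ) * H i)) := by
      rw [Finset.mul_sum]
      exact Finset.sum_le_sum fun i hi => (hterm i hi).2
    exact ⟨(div_le_div_iff_of_pos_right htR).2 hnumle, (div_le_div_iff_of_pos_right htR).2 hnumge⟩
  obtain ⟨n₀, hn₀⟩ := eventually_atTop.1 hfinal
  exact ⟨n₀, fun n hn => hn₀ n hn⟩
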